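/- arXiv:2211.12121 — 3 statements merged into one kernel-verified Lean document; each statement's English description precedes it below -/
import Mathlib

section
/- Let V be a finite-dimensional subspace of a Hilbert space H with orthogonal projection P, and let B, B' be bounded self-adjoint operators on H such that PBP restricted to V is invertible with smallest eigenvalue λ > 0. If ‖B' − B‖ ≤ λ/2, then PB'P restricted to V is also invertible, and ‖P − (PBP)⁺(PB'P)‖ ≤ 1/2. -/
open ContinuousLinearMap RealInnerProductSpace

/-- The four Penrose conditions characterizing the Moore–Penrose pseudoinverse. -/
def IsPseudoinverse {H : Type*} [NormedAddCommGroup H] [InnerProductSpace ℝ H]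
    [CompleteSpace H] (A Ap : H →L[ℝ] H) : Prop :=
  A ∘L Ap ∘L A = A ∧ Ap ∘L A ∘L Ap = Ap ∧
    ContinuousLinearMap.adjoint (A ∘L Ap) = A ∘L Ap ∧
    ContinuousLinearMap.adjoint (Ap ∘L A) = Ap ∘L A

/-- An orthogonal projection: idempotent and self-adjoint. -/
def IsOrthProj {H : Type*} [NormedAddCommGroup H] [InnerProductSpace ℝ H]
    [CompleteSpace H] (P : H →L[ℝ] H) : Prop :=
  P ∘L P = P ∧ ContinuousLinearMap.adjoint P = P

/-- `lam` is the smallest eigenvalue of the restriction of `A` to the subspace `V`: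
it is an eigenvalue attained on `V` and a lower bound for the quadratic form on `V`. -/
def IsSmallestEigenvalueOn {H : Type*} [NormedAddCommGroup H] [InnerProductSpace ℝ H]
    [CompleteSpace H] (A : H →L[ℝ] H) (V : Submodule ℝ H) (lam : ℝ) : Prop :=
  (∀ v ∈ V, lam * ‖v‖ ^ 2 ≤ ⟪v, A v⟫) ∧ ∃ v ∈ V, v ≠ 0 ∧ A v = lam • v

private lemma core_pinv {H : Type*} [NormedAddCommGroup H] [InnerProductSpace ℝ H]
    [CompleteSpace H] {P A Ap : H →L[ℝ] H}
    (hPP : P ∘L P = P) (hPsa : ContinuousLinearMap.adjoint P = P)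
    (hPA : P ∘L A = A) (hAP : A ∘L P = A)
    (hAsa : ContinuousLinearMap.adjoint A = A)
    (hker : ∀ x, A x = 0 → P x = 0)
    (hpi : IsPseudoinverse A Ap) :
    Ap ∘L A = P ∧ A ∘L Ap = P := by
  obtain ⟨h1, h2, h3, h4⟩ := hpi
  constructor
  · -- Q := Ap ∘L A equals P
    have hQP : (Ap ∘L A) ∘L P = Ap ∘L A := by
      rw [ContinuousLinearMap.comp_assoc, hAP]
    have hPQ : P ∘L (Ap ∘L A) = Ap ∘L A := by
      have h := congrArg ContinuousLinearMap.adjoint hQP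
      rwa [ContinuousLinearMap.adjoint_comp, hPsa, h4] at h
    have key : P - Ap ∘L A = 0 := by
      ext x
      have hc : A ∘L (P - Ap ∘L A) = 0 := by
        rw [ContinuousLinearMap.comp_sub, hAP, h1, sub_self]
      have hA0 : A ((P - Ap ∘L A) x) = 0 := by
        have : (A ∘L (P - Ap ∘L A)) x = (0 : H →L[ℝ] H) x := by rw [hc]
        simpa using this
      have hP0 := hker _ hA0
      have hPS : P ∘L (P - Ap ∘L A) = P - Ap ∘L A := by
        rw [ContinuousLinearMap.comp_sub, hPP, hPQ]
      have heq : (P - Ap ∘L A) x = P ((P - Ap ∘L A) x) := by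
        conv_lhs => rw [← hPS]
        rfl
      rw [ContinuousLinearMap.zero_apply, heq]
      exact hP0
    have := sub_eq_zero.mp key
    exact this.symm
  · -- R := A ∘L Ap equals P
    have hPR : P ∘L (A ∘L Ap) = A ∘L Ap := by
      rw [← ContinuousLinearMap.comp_assoc, hPA]
    have hSA : (P - A ∘L Ap) ∘L A = 0 := by
      rw [ContinuousLinearMap.sub_comp, hPA, ContinuousLinearMap.comp_assoc, h1, sub_self]
    have hAS : A ∘L (P - A ∘L Ap) = 0 := by
      have h := congrArg ContinuousLinearMap.adjoint hSA
      have hSsa : ContinuousLinearMap.adjoint (P - A ∘L Ap) = P - A ∘L Ap := by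
        rw [map_sub, hPsa, h3]
      rwa [ContinuousLinearMap.adjoint_comp, hAsa, hSsa, map_zero] at h
    have key : P - A ∘L Ap = 0 := by
      ext x
      have hA0 : A ((P - A ∘L Ap) x) = 0 := by
        have : (A ∘L (P - A ∘L Ap)) x = (0 : H →L[ℝ] H) x := by rw [hAS]
        simpa using this
      have hP0 := hker _ hA0
      have hPS : P ∘L (P - A ∘L Ap) = P - A ∘L Ap := by
        rw [ContinuousLinearMap.comp_sub, hPP, hPR]
      have heq : (P - A ∘L Ap) x = P ((P - A ∘L Ap) x) := by
        conv_lhs => rw [← hPS]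
        rfl
      rw [ContinuousLinearMap.zero_apply, heq]
      exact hP0
    have := sub_eq_zero.mp key
    exact this.symm

theorem stmt_2 {H : Type*} [NormedAddCommGroup H] [InnerProductSpace ℝ H]
    [CompleteSpace H] [TopologicalSpace.SeparableSpace H]
    (V : Submodule ℝ H) [FiniteDimensional ℝ V]
    (P : H →L[ℝ] H) (hP : IsOrthProj P) (hPV : LinearMap.range (P : H →ₗ[ℝ] H) = V)
    (B B' : H →L[ℝ] H)
    (hB : ContinuousLinearMap.adjoint B = B) (hB' : ContinuousLinearMap.adjoint B' = B')
    (hBpos : ∀ x, 0 ≤ ⟪x, B x⟫) (hB'pos : ∀ x, 0 ≤ ⟪x, B' x⟫)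
    (lam : ℝ) (hlam : 0 < lam)
    (hmin : IsSmallestEigenvalueOn (P ∘L B ∘L P) V lam)
    (hnear : ‖B' - B‖ ≤ lam / 2) :
    (∀ Bp', IsPseudoinverse (P ∘L B' ∘L P) Bp' →
      Bp' ∘L (P ∘L B' ∘L P) = P ∧ (P ∘L B' ∘L P) ∘L Bp' = P) ∧
    (∀ Bp, IsPseudoinverse (P ∘L B ∘L P) Bp →
      ‖P - Bp ∘L (P ∘L B' ∘L P)‖ ≤ 1 / 2) := by
  obtain ⟨hPP, hPsa⟩ := hP
  obtain ⟨hlow, -⟩ := hmin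
  -- basic facts about P
  have hPPapp : ∀ x, P (P x) = P x := by
    intro x
    have : (P ∘L P) x = P x := by rw [hPP]
    simpa using this
  have hmem : ∀ x, P x ∈ V := by
    intro x; rw [← hPV]; exact ⟨x, rfl⟩
  have hfix : ∀ v ∈ V, P v = v := by
    intro v hv
    rw [← hPV] at hv
    obtain ⟨w, rfl⟩ := hv
    exact hPPapp w
  have hPinner : ∀ x y : H, ⟪x, P y⟫ = ⟪P x, y⟫ := by
    intro x y
    conv_lhs => rw [← hPsa]
    exact ContinuousLinearMap.adjoint_inner_right P x y
  have hPnorm : ∀ x, ‖P x‖ ≤ ‖x‖ := by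
    intro x
    have h1 : ⟪P x, P x⟫ = ⟪x, P x⟫ := by
      rw [← hPinner x (P x), hPPapp]
    have h2 : ‖P x‖ ^ 2 = ⟪x, P x⟫ := by
      rw [← h1, real_inner_self_eq_norm_sq]
    have h3 : ⟪x, P x⟫ ≤ ‖x‖ * ‖P x‖ := real_inner_le_norm x (P x)
    nlinarith [norm_nonneg (P x), norm_nonneg x]
  -- quadratic form identity
  have hquad : ∀ (C : H →L[ℝ] H) (x : H), ⟪x, (P ∘L C ∘L P) x⟫ = ⟪P x, C (P x)⟫ := by
    intro C x
    have : (P ∘L C ∘L P) x = P (C (P x)) := rfl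
    rw [this, hPinner]
  -- self-adjointness and compositions
  have hAsa : ∀ (C : H →L[ℝ] H), ContinuousLinearMap.adjoint C = C →
      ContinuousLinearMap.adjoint (P ∘L C ∘L P) = P ∘L C ∘L P := by
    intro C hC
    rw [ContinuousLinearMap.adjoint_comp, ContinuousLinearMap.adjoint_comp, hC, hPsa,
      ContinuousLinearMap.comp_assoc]
  have hPA : ∀ (C : H →L[ℝ] H), P ∘L (P ∘L C ∘L P) = P ∘L C ∘L P := by
    intro C
    rw [← ContinuousLinearMap.comp_assoc P P (C ∘L P), hPP]
  have hAP : ∀ (C : H →L[ℝ] H), (P ∘L C ∘L P) ∘L P = P ∘L C ∘L P := by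
    intro C
    rw [ContinuousLinearMap.comp_assoc, ContinuousLinearMap.comp_assoc, hPP]
  -- lower bound for B' on V
  have hlow' : ∀ v ∈ V, lam / 2 * ‖v‖ ^ 2 ≤ ⟪v, (P ∘L B' ∘L P) v⟫ := by
    intro v hv
    have hvP := hfix v hv
    have e1 : ⟪v, (P ∘L B' ∘L P) v⟫ = ⟪v, B' v⟫ := by rw [hquad B' v, hvP]
    have e2 : ⟪v, (P ∘L B ∘L P) v⟫ = ⟪v, B v⟫ := by rw [hquad B v, hvP]
    have hsplit : ⟪v, B' v⟫ = ⟪v, B v⟫ + ⟪v, (B' - B) v⟫ := by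
      rw [ContinuousLinearMap.sub_apply, inner_sub_right]; ring
    have hcs : |⟪v, (B' - B) v⟫| ≤ lam / 2 * ‖v‖ ^ 2 := by
      have h1 := abs_real_inner_le_norm v ((B' - B) v)
      have h2 := (B' - B).le_opNorm v
      have h3 : ‖B' - B‖ * ‖v‖ ≤ lam / 2 * ‖v‖ := by
        apply mul_le_mul_of_nonneg_right hnear (norm_nonneg v)
      nlinarith [norm_nonneg v, norm_nonneg ((B' - B) v)]
    have hB0 := hlow v hv
    rw [e2] at hB0
    have := abs_le.mp hcs
    rw [e1, hsplit]
    linarith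
  -- kernel conditions
  have hkergen : ∀ (C : H →L[ℝ] H) (mu : ℝ), 0 < mu →
      (∀ v ∈ V, mu * ‖v‖ ^ 2 ≤ ⟪v, (P ∘L C ∘L P) v⟫) →
      ∀ x, (P ∘L C ∘L P) x = 0 → P x = 0 := by
    intro C mu hmu hlo x hx
    have h1 := hlo (P x) (hmem x)
    have h2 : (P ∘L C ∘L P) (P x) = (P ∘L C ∘L P) x := by
      show P (C (P (P x))) = P (C (P x))
      rw [hPPapp]
    rw [h2, hx, inner_zero_right] at h1
    have hs : ‖P x‖ ^ 2 ≤ 0 := by nlinarith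
    have hs2 : ‖P x‖ ^ 2 = 0 := le_antisymm hs (sq_nonneg _)
    have hn : ‖P x‖ = 0 := by
      exact (pow_eq_zero_iff two_ne_zero).mp hs2
    exact norm_eq_zero.mp hn
  have hkerA : ∀ x, (P ∘L B ∘L P) x = 0 → P x = 0 := hkergen B lam hlam hlow
  have hkerA' : ∀ x, (P ∘L B' ∘L P) x = 0 → P x = 0 :=
    hkergen B' (lam / 2) (by linarith) hlow'
  constructor
  · intro Bp' hpi'
    exact core_pinv hPP hPsa (hPA B') (hAP B') (hAsa B' hB') hkerA' hpi'
  · intro Bp hpi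
    obtain ⟨hQ, hR⟩ := core_pinv hPP hPsa (hPA B) (hAP B) (hAsa B hB) hkerA hpi
    obtain ⟨h1, h2, h3, h4⟩ := hpi
    -- P ∘L Bp = Bp
    have hPBp : P ∘L Bp = Bp := by
      calc P ∘L Bp = (Bp ∘L (P ∘L B ∘L P)) ∘L Bp := by rw [hQ]
        _ = Bp ∘L ((P ∘L B ∘L P) ∘L Bp) := ContinuousLinearMap.comp_assoc _ _ _
        _ = Bp := h2
    -- norm bound on Bp
    have hBp : ∀ x, ‖Bp x‖ ≤ 1 / lam * ‖x‖ := by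
      intro x
      have hAu : (P ∘L B ∘L P) (Bp x) = P x := by
        have : ((P ∘L B ∘L P) ∘L Bp) x = P x := by rw [hR]
        simpa using this
      have hPu : P (Bp x) = Bp x := by
        have : (P ∘L Bp) x = Bp x := by rw [hPBp]
        simpa using this
      have hmemu : Bp x ∈ V := by rw [← hPu]; exact hmem _
      have hq := hlow (Bp x) hmemu
      rw [hAu] at hq
      have hcs : ⟪Bp x, P x⟫ ≤ ‖Bp x‖ * ‖P x‖ := real_inner_le_norm _ _
      have hPx := hPnorm x
      rcases eq_or_ne (Bp x) 0 with h | h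
      · rw [h, norm_zero]
        positivity
      · have hupos : 0 < ‖Bp x‖ := norm_pos_iff.mpr h
        have hprod : ‖Bp x‖ * ‖P x‖ ≤ ‖Bp x‖ * ‖x‖ :=
          mul_le_mul_of_nonneg_left hPx hupos.le
        have hkey : lam * ‖Bp x‖ ≤ ‖x‖ := by nlinarith
        calc ‖Bp x‖ = 1 / lam * (lam * ‖Bp x‖) := by field_simp
          _ ≤ 1 / lam * ‖x‖ := mul_le_mul_of_nonneg_left hkey (by positivity)
    refine ContinuousLinearMap.opNorm_le_bound _ (by norm_num) ?_
    intro x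
    have hop : P - Bp ∘L (P ∘L B' ∘L P) = Bp ∘L ((P ∘L B ∘L P) - (P ∘L B' ∘L P)) := by
      rw [ContinuousLinearMap.comp_sub, hQ]
    have e : (P - Bp ∘L (P ∘L B' ∘L P)) x
        = Bp (((P ∘L B ∘L P) - (P ∘L B' ∘L P)) x) := by
      rw [hop]; rfl
    rw [e]
    have hD : ‖((P ∘L B ∘L P) - (P ∘L B' ∘L P)) x‖ ≤ lam / 2 * ‖x‖ := by
      have hdx : ((P ∘L B ∘L P) - (P ∘L B' ∘L P)) x = P ((B - B') (P x)) := by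
        simp [ContinuousLinearMap.sub_apply, ContinuousLinearMap.comp_apply, map_sub]
      rw [hdx]
      have hn : ‖B - B'‖ ≤ lam / 2 := by rw [norm_sub_rev]; exact hnear
      calc ‖P ((B - B') (P x))‖ ≤ ‖(B - B') (P x)‖ := hPnorm _
        _ ≤ ‖B - B'‖ * ‖P x‖ := (B - B').le_opNorm _
        _ ≤ lam / 2 * ‖x‖ :=
            mul_le_mul hn (hPnorm x) (norm_nonneg _) (by linarith)
    calc ‖Bp (((P ∘L B ∘L P) - (P ∘L B' ∘L P)) x)‖
        ≤ 1 / lam * ‖((P ∘L B ∘L P) - (P ∘L B' ∘L P)) x‖ := hBp _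
      _ ≤ 1 / lam * (lam / 2 * ‖x‖) := by
          apply mul_le_mul_of_nonneg_left hD (by positivity)
      _ = 1 / 2 * ‖x‖ := by field_simp
end

section
/- Let V be a finite-dimensional subspace of a Hilbert space H with orthogonal projection P, and let B, B' be bounded self-adjoint operators on H such that PBP restricted to V is invertible with smallest nonzero eigenvalue λ > 0. If ‖B' − B‖ ≤ λ/2, then ‖(PB'P)⁺‖ ≤ 2/λ. -/
open ContinuousLinearMap RealInnerProductSpace

theorem stmt_3 {H : Type*} [NormedAddCommGroup H] [InnerProductSpace ℝ H]
    [CompleteSpace H] [TopologicalSpace.SeparableSpace H]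
    (V : Submodule ℝ H) [FiniteDimensional ℝ V]
    (P : H →L[ℝ] H) (hP : IsOrthProj P) (hPV : LinearMap.range (P : H →ₗ[ℝ] H) = V)
    (B B' : H →L[ℝ] H)
    (hB : ContinuousLinearMap.adjoint B = B) (hB' : ContinuousLinearMap.adjoint B' = B')
    (hBpos : ∀ x, 0 ≤ ⟪x, B x⟫) (hB'pos : ∀ x, 0 ≤ ⟪x, B' x⟫)
    (lam : ℝ) (hlam : 0 < lam)
    (hmin : IsSmallestEigenvalueOn (P ∘L B ∘L P) V lam)
    (hnear : ‖B' - B‖ ≤ lam / 2)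
    (Bp' : H →L[ℝ] H) (hBp' : IsPseudoinverse (P ∘L B' ∘L P) Bp') :
    ‖Bp'‖ ≤ 2 / lam := by
  obtain ⟨hPidem, hPsa⟩ := hP
  obtain ⟨h1, h2, h3, h4⟩ := hBp'
  have hmin1 := hmin.1
  set A' : H →L[ℝ] H := P ∘L B' ∘L P with hA'def
  have hPP : ∀ x, P (P x) = P x := fun x => DFunLike.congr_fun hPidem x
  have hPinner : ∀ v w : H, ⟪P v, w⟫ = ⟪v, P w⟫ := fun v w => by
    conv_lhs => rw [← hPsa]
    exact ContinuousLinearMap.adjoint_inner_left P w v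
  have hA'app : ∀ x, A' x = P (B' (P x)) := fun x => rfl
  have hPA' : ∀ w, P (A' w) = A' w := fun w => by
    rw [hA'app]; exact hPP _
  have hA'sa : ContinuousLinearMap.adjoint A' = A' := by
    rw [hA'def, ContinuousLinearMap.adjoint_comp, ContinuousLinearMap.adjoint_comp,
      hPsa, hB', ← ContinuousLinearMap.comp_assoc]
  have hT : Bp' ∘L A' = A' ∘L ContinuousLinearMap.adjoint Bp' := by
    conv_lhs => rw [← h4]
    rw [ContinuousLinearMap.adjoint_comp, hA'sa]
  -- range of Bp' is fixed by P
  have e1 : ∀ x, Bp' (A' (Bp' x)) = Bp' x := fun x => DFunLike.congr_fun h2 x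
  have hPBp' : ∀ x, P (Bp' x) = Bp' x := by
    intro x
    have e2 : Bp' (A' (Bp' x)) = A' (ContinuousLinearMap.adjoint Bp' (Bp' x)) :=
      DFunLike.congr_fun hT (Bp' x)
    calc P (Bp' x) = P (Bp' (A' (Bp' x))) := by rw [e1]
      _ = P (A' (ContinuousLinearMap.adjoint Bp' (Bp' x))) := by rw [e2]
      _ = A' (ContinuousLinearMap.adjoint Bp' (Bp' x)) := hPA' _
      _ = Bp' (A' (Bp' x)) := e2.symm
      _ = Bp' x := e1 x
  -- lower bound of quadratic form on V
  have hVlow : ∀ v : H, P v = v → lam / 2 * ‖v‖ ^ 2 ≤ ⟪v, A' v⟫ := by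
    intro v hv
    have hvV : v ∈ V := by rw [← hPV]; exact ⟨v, hv⟩
    have hA := hmin1 v hvV
    have hBv : ⟪v, (P ∘L B ∘L P) v⟫ = ⟪v, B v⟫ := by
      show ⟪v, P (B (P v))⟫ = _
      rw [← hPinner, hv]
    have hB'v : ⟪v, A' v⟫ = ⟪v, B' v⟫ := by
      rw [hA'app, ← hPinner, hv]
    have hdiff : |⟪v, (B' - B) v⟫| ≤ lam / 2 * ‖v‖ ^ 2 := by
      calc |⟪v, (B' - B) v⟫| ≤ ‖v‖ * ‖(B' - B) v‖ := abs_real_inner_le_norm _ _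
        _ ≤ ‖v‖ * (‖B' - B‖ * ‖v‖) := by
            gcongr; exact ContinuousLinearMap.le_opNorm _ _
        _ ≤ ‖v‖ * (lam / 2 * ‖v‖) := by
            gcongr
        _ = lam / 2 * ‖v‖ ^ 2 := by ring
    have hsub : ⟪v, (B' - B) v⟫ = ⟪v, B' v⟫ - ⟪v, B v⟫ := by
      rw [ContinuousLinearMap.sub_apply, inner_sub_right]
    rw [hBv] at hA
    rw [hB'v]
    have := abs_le.mp hdiff
    linarith [this.1, this.2, hA]
  -- the projection A' ∘ Bp' is a contraction
  have hQcontr : ∀ x, ‖A' (Bp' x)‖ ≤ ‖x‖ := by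
    intro x
    have hsa : ∀ a b : H, ⟪A' (Bp' a), b⟫ = ⟪a, A' (Bp' b)⟫ := by
      intro a b
      have := ContinuousLinearMap.adjoint_inner_left (A' ∘L Bp') b a
      rw [h3] at this
      exact this
    have hidem : A' (Bp' (A' (Bp' x))) = A' (Bp' x) := by rw [e1]
    have hn : ‖A' (Bp' x)‖ ^ 2 ≤ ‖x‖ * ‖A' (Bp' x)‖ := by
      rw [← real_inner_self_eq_norm_sq, hsa x (A' (Bp' x)), hidem]
      exact real_inner_le_norm _ _
    nlinarith [norm_nonneg (A' (Bp' x)), norm_nonneg x]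
  refine ContinuousLinearMap.opNorm_le_bound Bp' (by positivity) fun x => ?_
  have hu := hVlow (Bp' x) (hPBp' x)
  have h2' : ⟪Bp' x, A' (Bp' x)⟫ ≤ ‖Bp' x‖ * ‖x‖ := by
    calc ⟪Bp' x, A' (Bp' x)⟫ ≤ ‖Bp' x‖ * ‖A' (Bp' x)‖ := real_inner_le_norm _ _
      _ ≤ ‖Bp' x‖ * ‖x‖ := by gcongr; exact hQcontr x
  rcases eq_or_lt_of_le (norm_nonneg (Bp' x)) with h0 | hpos
  · rw [← h0]; positivity
  · rw [div_mul_eq_mul_div, le_div_iff₀ hlam]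
    nlinarith [hu, h2', hpos]
end

section
/- Let V be a finite-dimensional subspace of a Hilbert space H with orthogonal projection P, and B, B' bounded self-adjoint nonnegative operators on H with λ = λ_min(PBP|_V) > 0, ‖B' − B‖ ≤ λ/2, and ‖(PBP)⁺ B‖ ≤ 1 + D. Then ‖(PB'P)⁺ (PBP)‖ ≤ 2(1 + D). -/
open ContinuousLinearMap RealInnerProductSpace

lemma proj_pt_norm_le {H : Type*} [NormedAddCommGroup H] [InnerProductSpace ℝ H]
    [CompleteSpace H] (Q : H →L[ℝ] H) (hid : Q ∘L Q = Q)
    (hsa : ContinuousLinearMap.adjoint Q = Q) (x : H) : ‖Q x‖ ≤ ‖x‖ := by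
  have h1 : ⟪Q x, Q x⟫ = ⟪x, Q x⟫ := by
    have h := ContinuousLinearMap.adjoint_inner_left Q x (Q x)
    rw [hsa] at h
    have h2 : Q (Q x) = Q x := by
      have := congrArg (fun T : H →L[ℝ] H => T x) hid
      simpa using this
    rw [h2] at h
    linarith [real_inner_comm (Q x) x, h]
  have hcs := real_inner_le_norm x (Q x)
  have hsq : ‖Q x‖ ^ 2 = ⟪Q x, Q x⟫ := (real_inner_self_eq_norm_sq (Q x)).symm
  nlinarith [norm_nonneg (Q x), norm_nonneg x]

theorem stmt_5 {H : Type*} [NormedAddCommGroup H] [InnerProductSpace ℝ H]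
    [CompleteSpace H] [TopologicalSpace.SeparableSpace H]
    (V : Submodule ℝ H) [FiniteDimensional ℝ V]
    (P : H →L[ℝ] H) (hP : IsOrthProj P) (hPV : LinearMap.range (P : H →ₗ[ℝ] H) = V)
    (B B' : H →L[ℝ] H)
    (hB : ContinuousLinearMap.adjoint B = B) (hB' : ContinuousLinearMap.adjoint B' = B')
    (hBpos : ∀ x, 0 ≤ ⟪x, B x⟫) (hB'pos : ∀ x, 0 ≤ ⟪x, B' x⟫)
    (lam : ℝ) (hlam : 0 < lam)
    (hmin : IsSmallestEigenvalueOn (P ∘L B ∘L P) V lam)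
    (hnear : ‖B' - B‖ ≤ lam / 2)
    (D : ℝ) (hD : 0 < D)
    (Bp : H →L[ℝ] H) (hBp : IsPseudoinverse (P ∘L B ∘L P) Bp)
    (hDbound : ‖Bp ∘L B‖ ≤ 1 + D)
    (Bp' : H →L[ℝ] H) (hBp' : IsPseudoinverse (P ∘L B' ∘L P) Bp') :
    ‖Bp' ∘L (P ∘L B ∘L P)‖ ≤ 2 * (1 + D) := by
  obtain ⟨hP1, hP2⟩ := hP
  obtain ⟨h1', h2', h3', h4'⟩ := hBp'
  set A := P ∘L B ∘L P with hA
  set A' := P ∘L B' ∘L P with hA'def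
  -- A' is self-adjoint
  have hA'sa : ContinuousLinearMap.adjoint A' = A' := by
    rw [hA'def, ContinuousLinearMap.adjoint_comp, ContinuousLinearMap.adjoint_comp,
      hP2, hB']
    ext x; simp
  -- membership / fixed point facts
  have hPmem : ∀ z, P z ∈ V := fun z => hPV ▸ LinearMap.mem_range_self (P : H →ₗ[ℝ] H) z
  have hPfix : ∀ v ∈ V, P v = v := by
    intro v hv
    rw [← hPV] at hv
    obtain ⟨w, rfl⟩ := hv
    have := congrArg (fun T : H →L[ℝ] H => T w) hP1
    simpa using this
  -- quadratic lower bound for A' on V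
  have hquad : ∀ v ∈ V, lam / 2 * ‖v‖ ^ 2 ≤ ⟪v, A' v⟫ := by
    intro v hv
    have hAv : ⟪v, A v⟫ = ⟪v, B v⟫ := by
      have : A v = P (B v) := by simp [hA, hPfix v hv]
      rw [this]
      conv_lhs => rw [← hP2]
      rw [ContinuousLinearMap.adjoint_inner_right, hPfix v hv]
    have hA'v : ⟪v, A' v⟫ = ⟪v, B' v⟫ := by
      have : A' v = P (B' v) := by simp [hA'def, hPfix v hv]
      rw [this]
      conv_lhs => rw [← hP2]
      rw [ContinuousLinearMap.adjoint_inner_right, hPfix v hv]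
    have hdiff : |⟪v, (B' - B) v⟫| ≤ lam / 2 * ‖v‖ ^ 2 := by
      calc |⟪v, (B' - B) v⟫| ≤ ‖v‖ * ‖(B' - B) v‖ := abs_real_inner_le_norm _ _
        _ ≤ ‖v‖ * (‖B' - B‖ * ‖v‖) := by
            have := (B' - B).le_opNorm v
            exact mul_le_mul_of_nonneg_left this (norm_nonneg v)
        _ ≤ lam / 2 * ‖v‖ ^ 2 := by nlinarith [norm_nonneg v, norm_nonneg (B' - B)]
    have hsub : ⟪v, (B' - B) v⟫ = ⟪v, B' v⟫ - ⟪v, B v⟫ := by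
      simp [ContinuousLinearMap.sub_apply, inner_sub_right]
    have hmin1 := hmin.1 v hv
    rw [hA'v]
    rw [hAv] at hmin1
    have habs := abs_le.mp hdiff
    linarith [habs.1]
  -- Q2 = A' ∘L Bp' is an orthogonal projection
  have hQ2id : (A' ∘L Bp') ∘L (A' ∘L Bp') = A' ∘L Bp' := by
    calc (A' ∘L Bp') ∘L (A' ∘L Bp') = (A' ∘L Bp' ∘L A') ∘L Bp' := by
          ext x; simp
      _ = A' ∘L Bp' := by rw [h1']
  have hQ2norm : ∀ x, ‖(A' ∘L Bp') x‖ ≤ ‖x‖ := proj_pt_norm_le _ hQ2id h3'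
  -- pointwise version of Penrose 2
  have hpen2 : ∀ x, Bp' (A' (Bp' x)) = Bp' x := by
    intro x
    have := congrArg (fun T : H →L[ℝ] H => T x) h2'
    simpa using this
  -- Bp' ∘L A' = A' ∘L adjoint Bp'
  have hcomp : Bp' ∘L A' = A' ∘L ContinuousLinearMap.adjoint Bp' := by
    conv_lhs => rw [← h4']
    rw [ContinuousLinearMap.adjoint_comp, hA'sa]
  -- norm bound on Bp'
  have hBp'bound : ∀ x, ‖Bp' x‖ ≤ 2 / lam * ‖x‖ := by
    intro x
    set y := Bp' x with hy
    have hyV : y ∈ V := by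
      have h1 : y = (Bp' ∘L A') y := (hpen2 x).symm
      have h2 : (Bp' ∘L A') y = P (B' (P (ContinuousLinearMap.adjoint Bp' y))) := by
        rw [hcomp]; simp [hA'def]
      rw [h1, h2]
      exact hPmem _
    have hq := hquad y hyV
    have hup : ⟪y, A' y⟫ ≤ ‖y‖ * ‖x‖ := by
      have : A' y = (A' ∘L Bp') x := by simp [hy]
      rw [this]
      calc ⟪y, (A' ∘L Bp') x⟫ ≤ ‖y‖ * ‖(A' ∘L Bp') x‖ := real_inner_le_norm _ _
        _ ≤ ‖y‖ * ‖x‖ := mul_le_mul_of_nonneg_left (hQ2norm x) (norm_nonneg y)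
    rw [div_mul_eq_mul_div, le_div_iff₀ hlam]
    rcases eq_or_lt_of_le (norm_nonneg y) with h0 | h0
    · rw [← h0, zero_mul]; positivity
    · nlinarith [norm_nonneg x]
  -- Q1 = Bp' ∘L A' contracts
  have hQ1id : (Bp' ∘L A') ∘L (Bp' ∘L A') = Bp' ∘L A' := by
    calc (Bp' ∘L A') ∘L (Bp' ∘L A') = (Bp' ∘L A' ∘L Bp') ∘L A' := by ext x; simp
      _ = Bp' ∘L A' := by rw [h2']
  have hQ1norm : ∀ x, ‖Bp' (A' x)‖ ≤ ‖x‖ := by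
    intro x
    have := proj_pt_norm_le _ hQ1id h4' x
    simpa using this
  -- difference bound
  have hdiffn : ∀ x, ‖(A - A') x‖ ≤ lam / 2 * ‖x‖ := by
    intro x
    have h1 : (A - A') x = P ((B - B') (P x)) := by
      simp [hA, hA'def, ContinuousLinearMap.sub_apply, map_sub]
    rw [h1]
    calc ‖P ((B - B') (P x))‖ ≤ ‖(B - B') (P x)‖ := proj_pt_norm_le P hP1 hP2 _
      _ ≤ ‖B - B'‖ * ‖P x‖ := (B - B').le_opNorm _
      _ ≤ (lam / 2) * ‖x‖ := by
          have h2 : ‖B - B'‖ = ‖B' - B‖ := norm_sub_rev _ _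
          have h3 : ‖P x‖ ≤ ‖x‖ := proj_pt_norm_le P hP1 hP2 x
          have h4 : ‖B - B'‖ ≤ lam / 2 := by rw [h2]; exact hnear
          nlinarith [norm_nonneg (P x), norm_nonneg x]
  -- final
  apply ContinuousLinearMap.opNorm_le_bound _ (by nlinarith)
  intro x
  have hsplit : (Bp' ∘L A) x = Bp' (A' x) + Bp' ((A - A') x) := by
    simp [ContinuousLinearMap.sub_apply, map_sub]
  rw [hsplit]
  have h1 : ‖Bp' ((A - A') x)‖ ≤ 2 / lam * (lam / 2 * ‖x‖) := by
    calc ‖Bp' ((A - A') x)‖ ≤ 2 / lam * ‖(A - A') x‖ := hBp'bound _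
      _ ≤ 2 / lam * (lam / 2 * ‖x‖) := by
          apply mul_le_mul_of_nonneg_left (hdiffn x); positivity
  have h2 : 2 / lam * (lam / 2 * ‖x‖) = ‖x‖ := by field_simp
  calc ‖Bp' (A' x) + Bp' ((A - A') x)‖ ≤ ‖Bp' (A' x)‖ + ‖Bp' ((A - A') x)‖ := norm_add_le _ _
    _ ≤ ‖x‖ + ‖x‖ := by rw [h2] at h1; exact add_le_add (hQ1norm x) h1
    _ ≤ 2 * (1 + D) * ‖x‖ := by nlinarith [norm_nonneg x]
end
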